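/- Let A be a unital C*-algebra and let α, γ ∈ A satisfy the SU_q(2) relations; let v_{i,j} = v_{i,j}(α, γ). Then for all r, p ∈ {−1, 0, 1}: σ²·ζ^{rp}·v_{−1,r}v_{0,p} − ςσ²·ζ^{r(p+1)}·v_{0,r}v_{−1,p} equals 0 if r + p ∉ {−1, 0, 1}, and equals λ_{r,p}·v_{−1,r+p} otherwise, where λ_{−1,0} = σ², λ_{−1,1} = −ς, λ_{0,−1} = −ςσ², λ_{0,0} = 1 − ς², λ_{0,1} = σ², λ_{1,−1} = ς, λ_{1,0} = −ςσ². -/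

import Mathlib

open scoped ComplexConjugate

/-- Elements `α`, `γ` of a unital C*-algebra satisfy the SU_q(2) relations. -/
def SUq2Rel {A : Type*} [Ring A] [StarRing A] [Module ℂ A] (q : ℂ) (α γ : A) : Prop :=
  star α * α + star γ * γ = 1 ∧
  α * star α + ((‖q‖ : ℂ) ^ 2) • (star γ * γ) = 1 ∧
  α * γ = conj q • (γ * α) ∧
  γ * star γ = star γ * γ

/-- `ζ = q / conj q`. -/
noncomputable def zetaC (q : ℂ) : ℂ := q / conj q

/-- `ς = |q|²`, as a complex scalar. -/
noncomputable def vsig (q : ℂ) : ℂ := (‖q‖ : ℂ) ^ 2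

/-- `σ² = 1 + |q|²`, as a complex scalar. -/
noncomputable def sigSq (q : ℂ) : ℂ := 1 + vsig q

/-- The matrix elements `v_{i,j}(x, y)`, `i, j ∈ {-1, 0, 1}` (and `0` for other indices). -/
noncomputable def vij {A : Type*} [Ring A] [StarRing A] [Module ℂ A]
    (q : ℂ) (x y : A) (i j : ℤ) : A :=
  if i = -1 then
    if j = -1 then x ^ 2
    else if j = 0 then -(sigSq q • (star y * x))
    else if j = 1 then -(q • star y ^ 2)
    else 0
  else if i = 0 then
    if j = -1 then zetaC q • (x * y)
    else if j = 0 then 1 - sigSq q • (star y * y)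
    else if j = 1 then star y * star x
    else 0
  else if i = 1 then
    if j = -1 then -((q * zetaC q) • y ^ 2)
    else if j = 0 then -(sigSq q • (star x * y))
    else if j = 1 then star x ^ 2
    else 0
  else 0

/-- The coefficients `λ_{r,p}` (and `0` for the two excluded index pairs). -/
noncomputable def lamRP (q : ℂ) (r p : ℤ) : ℂ :=
  if r = -1 ∧ p = 0 then sigSq q
  else if r = -1 ∧ p = 1 then -(vsig q)
  else if r = 0 ∧ p = -1 then -(vsig q * sigSq q)
  else if r = 0 ∧ p = 0 then 1 - vsig q ^ 2
  else if r = 0 ∧ p = 1 then sigSq q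
  else if r = 1 ∧ p = -1 then vsig q
  else if r = 1 ∧ p = 0 then -(vsig q * sigSq q)
  else 0


theorem aux_h5 (q : ℂ) {A : Type*} [NormedRing A] [StarRing A] [CStarRing A] [NormedAlgebra ℂ A]
    [StarModule ℂ A] (α γ : A)
    (h2 : α * star α + (q * conj q) • (star γ * γ) = 1)
    (h3 : α * γ = conj q • (γ * α))
    (h4 : γ * star γ = star γ * γ) :
    α * star γ = q • (star γ * α) := by
  have hGA : star γ * star α = q • (star α * star γ) := by
    have := congrArg star h3
    simpa [star_smul, mul_comm] using this
  have haA : α * star α = 1 - (q * conj q) • (star γ * γ) := by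
    rw [← h2]; abel
  have hGgGg : star γ * γ * (star γ * γ) = star γ * (star γ * (γ * γ)) := by
    rw [mul_assoc, ← mul_assoc γ, h4]; noncomm_ring
  set x := α * star γ - q • (star γ * α) with hxdef
  have hx : x * star x = 0 := by
    have hs : star x = γ * star α - conj q • (star α * γ) := by
      simp [hxdef, star_smul, mul_comm]
    have T1 : α * star γ * (γ * star α) =
        (q * conj q) • (star γ * γ) - ((q*conj q)*(q*conj q)) • (star γ * (star γ * (γ * γ))) := by
      calc α * star γ * (γ * star α) = α * (γ * star γ) * star α := by rw [h4]; noncomm_ring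
        _ = (α * γ) * (star γ * star α) := by noncomm_ring
        _ = (conj q • (γ * α)) * (q • (star α * star γ)) := by rw [h3, hGA]
        _ = (q * conj q) • (γ * (α * star α) * star γ) := by
            simp [smul_smul, mul_comm]; noncomm_ring
        _ = (q * conj q) • (γ * (1 - (q * conj q) • (star γ * γ)) * star γ) := by rw [haA]
        _ = (q * conj q) • (γ * star γ) - ((q*conj q)*(q*conj q)) • (γ * star γ * (γ * star γ)) := by
            simp [mul_sub, sub_mul, smul_smul, smul_sub, mul_smul_comm, smul_mul_assoc]
            noncomm_ring
        _ = _ := by rw [h4, hGgGg]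
    have T2 : α * star γ * (star α * γ) =
        q • (star γ * γ) - (q*(q*conj q)) • (star γ * (star γ * (γ * γ))) := by
      calc α * star γ * (star α * γ) = α * (star γ * star α) * γ := by noncomm_ring
        _ = q • (α * star α * (star γ * γ)) := by rw [hGA]; simp [mul_smul_comm, smul_mul_assoc]; noncomm_ring
        _ = q • ((1 - (q * conj q) • (star γ * γ)) * (star γ * γ)) := by rw [haA]
        _ = q • (star γ * γ) - (q*(q*conj q)) • (star γ * γ * (star γ * γ)) := by
            simp [sub_mul, smul_sub, smul_smul]
        _ = _ := by rw [hGgGg]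
    have T3 : star γ * α * (γ * star α) =
        conj q • (star γ * γ) - (conj q*(q*conj q)) • (star γ * (star γ * (γ * γ))) := by
      calc star γ * α * (γ * star α) = star γ * (α * γ) * star α := by noncomm_ring
        _ = conj q • (star γ * γ * (α * star α)) := by rw [h3]; simp [mul_smul_comm, smul_mul_assoc]; noncomm_ring
        _ = conj q • (star γ * γ * (1 - (q * conj q) • (star γ * γ))) := by rw [haA]
        _ = conj q • (star γ * γ) - (conj q*(q*conj q)) • (star γ * γ * (star γ * γ)) := by
            simp [mul_sub, smul_sub, smul_smul]
        _ = _ := by rw [hGgGg]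
    have T4 : star γ * α * (star α * γ) =
        star γ * γ - (q*conj q) • (star γ * (star γ * (γ * γ))) := by
      calc star γ * α * (star α * γ) = star γ * (α * star α) * γ := by noncomm_ring
        _ = star γ * (1 - (q * conj q) • (star γ * γ)) * γ := by rw [haA]
        _ = star γ * γ - (q*conj q) • (star γ * (star γ * (γ * γ))) := by
            simp [mul_sub, sub_mul, smul_sub, mul_smul_comm, smul_mul_assoc, mul_assoc]
    rw [hs, hxdef]
    rw [sub_mul, mul_sub, mul_sub, smul_mul_assoc, smul_mul_assoc, mul_smul_comm, mul_smul_comm]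
    rw [T1, T2, T3, T4]
    simp only [smul_sub, smul_smul]
    module
  have := (CStarRing.mul_star_self_eq_zero_iff x).mp hx
  rw [sub_eq_zero] at this; exact this

set_option maxHeartbeats 1000000 in
theorem stmt7 (q : ℂ) (hq0 : 0 < ‖q‖) (hq1 : ‖q‖ < 1)
    {A : Type*} [NormedRing A] [StarRing A] [CStarRing A] [NormedAlgebra ℂ A]
    [StarModule ℂ A] [CompleteSpace A]
    (α γ : A) (h : SUq2Rel q α γ) :
    ∀ r ∈ ({-1, 0, 1} : Finset ℤ), ∀ p ∈ ({-1, 0, 1} : Finset ℤ),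
      (sigSq q * zetaC q ^ (r * p)) • (vij q α γ (-1) r * vij q α γ 0 p)
        - (vsig q * sigSq q * zetaC q ^ (r * (p + 1))) • (vij q α γ 0 r * vij q α γ (-1) p)
      = if r + p ∈ ({-1, 0, 1} : Finset ℤ) then lamRP q r p • vij q α γ (-1) (r + p)
        else 0 := by
  obtain ⟨h1, h2', h3, h4⟩ := h
  have hq : q ≠ 0 := fun hz => by simp [hz] at hq0
  have hcq : conj q ≠ 0 := by simpa using hq
  have hvs : vsig q = q * conj q := by
    rw [vsig, ← Complex.ofReal_pow, Complex.sq_norm]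
    exact (Complex.mul_conj q).symm
  have h2 : α * star α + (q * conj q) • (star γ * γ) = 1 := by
    rwa [show ((‖q‖ : ℂ))^2 = q * conj q from hvs] at h2'
  have h5 : α * star γ = q • (star γ * α) := aux_h5 q α γ h2 h3 h4
  have gA : γ * star α = conj q • (star α * γ) := by
    have := congrArg star h5
    simpa [star_smul, mul_comm] using this
  have GA : star γ * star α = q • (star α * star γ) := by
    have := congrArg star h3
    simpa [star_smul, mul_comm] using this
  have Ag : star α * γ = (conj q)⁻¹ • (γ * star α) := by
    rw [gA, smul_smul, inv_mul_cancel₀ hcq, one_smul]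
  have AG : star α * star γ = q⁻¹ • (star γ * star α) := by
    rw [GA, smul_smul, inv_mul_cancel₀ hq, one_smul]
  have aA : α * star α = 1 - (q * conj q) • (star γ * γ) := by rw [← h2]; abel
  have Aa : star α * α = 1 - star γ * γ := by rw [← h1]; abel
  have gG' : ∀ x : A, γ * (star γ * x) = star γ * (γ * x) := fun x => by
    rw [← mul_assoc, h4, mul_assoc]
  have ag' : ∀ x : A, α * (γ * x) = conj q • (γ * (α * x)) := fun x => by
    rw [← mul_assoc, h3, smul_mul_assoc, mul_assoc]
  have aG' : ∀ x : A, α * (star γ * x) = q • (star γ * (α * x)) := fun x => by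
    rw [← mul_assoc, h5, smul_mul_assoc, mul_assoc]
  have Ag' : ∀ x : A, star α * (γ * x) = (conj q)⁻¹ • (γ * (star α * x)) := fun x => by
    rw [← mul_assoc, Ag, smul_mul_assoc, mul_assoc]
  have AG' : ∀ x : A, star α * (star γ * x) = q⁻¹ • (star γ * (star α * x)) := fun x => by
    rw [← mul_assoc, AG, smul_mul_assoc, mul_assoc]
  have aA' : ∀ x : A, α * (star α * x) = x - (q * conj q) • (star γ * (γ * x)) := fun x => by
    rw [← mul_assoc, aA, sub_mul, one_mul, smul_mul_assoc, mul_assoc]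
  have Aa' : ∀ x : A, star α * (α * x) = x - star γ * (γ * x) := fun x => by
    rw [← mul_assoc, Aa, sub_mul, one_mul, mul_assoc]
  have hζ : zetaC q ≠ 0 := div_ne_zero hq hcq
  have z0 : zetaC q ^ (0:ℤ) = 1 := zpow_zero _
  have z1 : zetaC q ^ (1:ℤ) = zetaC q := zpow_one _
  have z2 : zetaC q ^ (2:ℤ) = zetaC q * zetaC q := by
    rw [show (2:ℤ) = 1+1 from rfl, zpow_add₀ hζ, zpow_one]
  have zm1 : zetaC q ^ (-1:ℤ) = (zetaC q)⁻¹ := zpow_neg_one _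
  have zm2 : zetaC q ^ (-2:ℤ) = (zetaC q * zetaC q)⁻¹ := by
    rw [show (-2:ℤ) = -(2:ℤ) from rfl, zpow_neg, z2]
  intro r hr p hp
  fin_cases hr
  · fin_cases hp
    · norm_num [vij, lamRP]
      simp only [z0, z1, z2, zm1, zm2, pow_two]
      simp only [mul_sub, sub_mul, mul_one, one_mul, mul_neg, neg_mul, smul_sub, smul_neg,
        neg_smul, smul_smul, smul_mul_assoc, mul_smul_comm, mul_assoc,
        ag', aG', Ag', AG', aA', Aa', gG', h3, h5, Ag, AG, aA, Aa, h4,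
        neg_neg, sub_zero, zero_sub, mul_zero, zero_mul, smul_zero, zero_smul, one_smul]
      try match_scalars
      all_goals
        simp only [sigSq, hvs, zetaC]
        try field_simp
        try ring
    · norm_num [vij, lamRP]
      simp only [z0, z1, z2, zm1, zm2, pow_two]
      simp only [mul_sub, sub_mul, mul_one, one_mul, mul_neg, neg_mul, smul_sub, smul_neg,
        neg_smul, smul_smul, smul_mul_assoc, mul_smul_comm, mul_assoc,
        ag', aG', Ag', AG', aA', Aa', gG', h3, h5, Ag, AG, aA, Aa, h4,
        neg_neg, sub_zero, zero_sub, mul_zero, zero_mul, smul_zero, zero_smul, one_smul]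
      try match_scalars
      all_goals
        simp only [sigSq, hvs, zetaC]
        try field_simp
        try ring
    · norm_num [vij, lamRP]
      simp only [z0, z1, z2, zm1, zm2, pow_two]
      simp only [mul_sub, sub_mul, mul_one, one_mul, mul_neg, neg_mul, smul_sub, smul_neg,
        neg_smul, smul_smul, smul_mul_assoc, mul_smul_comm, mul_assoc,
        ag', aG', Ag', AG', aA', Aa', gG', h3, h5, Ag, AG, aA, Aa, h4,
        neg_neg, sub_zero, zero_sub, mul_zero, zero_mul, smul_zero, zero_smul, one_smul]
      try match_scalars
      all_goals
        simp only [sigSq, hvs, zetaC]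
        try field_simp
        try ring
  · fin_cases hp
    · norm_num [vij, lamRP]
      simp only [z0, z1, z2, zm1, zm2, pow_two]
      simp only [mul_sub, sub_mul, mul_one, one_mul, mul_neg, neg_mul, smul_sub, smul_neg,
        neg_smul, smul_smul, smul_mul_assoc, mul_smul_comm, mul_assoc,
        ag', aG', Ag', AG', aA', Aa', gG', h3, h5, Ag, AG, aA, Aa, h4,
        neg_neg, sub_zero, zero_sub, mul_zero, zero_mul, smul_zero, zero_smul, one_smul]
      try match_scalars
      all_goals
        simp only [sigSq, hvs, zetaC]
        try field_simp
        try ring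
    · norm_num [vij, lamRP]
      simp only [z0, z1, z2, zm1, zm2, pow_two]
      simp only [mul_sub, sub_mul, mul_one, one_mul, mul_neg, neg_mul, smul_sub, smul_neg,
        neg_smul, smul_smul, smul_mul_assoc, mul_smul_comm, mul_assoc,
        ag', aG', Ag', AG', aA', Aa', gG', h3, h5, Ag, AG, aA, Aa, h4,
        neg_neg, sub_zero, zero_sub, mul_zero, zero_mul, smul_zero, zero_smul, one_smul]
      try match_scalars
      all_goals
        simp only [sigSq, hvs, zetaC]
        try field_simp
        try ring
    · norm_num [vij, lamRP]
      simp only [z0, z1, z2, zm1, zm2, pow_two]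
      simp only [mul_sub, sub_mul, mul_one, one_mul, mul_neg, neg_mul, smul_sub, smul_neg,
        neg_smul, smul_smul, smul_mul_assoc, mul_smul_comm, mul_assoc,
        ag', aG', Ag', AG', aA', Aa', gG', h3, h5, Ag, AG, aA, Aa, h4,
        neg_neg, sub_zero, zero_sub, mul_zero, zero_mul, smul_zero, zero_smul, one_smul]
      try match_scalars
      all_goals
        simp only [sigSq, hvs, zetaC]
        try field_simp
        try ring
  · fin_cases hp
    · norm_num [vij, lamRP]
      simp only [z0, z1, z2, zm1, zm2, pow_two]
      simp only [mul_sub, sub_mul, mul_one, one_mul, mul_neg, neg_mul, smul_sub, smul_neg,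
        neg_smul, smul_smul, smul_mul_assoc, mul_smul_comm, mul_assoc,
        ag', aG', Ag', AG', aA', Aa', gG', h3, h5, Ag, AG, aA, Aa, h4,
        neg_neg, sub_zero, zero_sub, mul_zero, zero_mul, smul_zero, zero_smul, one_smul]
      try match_scalars
      all_goals
        simp only [sigSq, hvs, zetaC]
        try field_simp
        try ring
    · norm_num [vij, lamRP]
      simp only [z0, z1, z2, zm1, zm2, pow_two]
      simp only [mul_sub, sub_mul, mul_one, one_mul, mul_neg, neg_mul, smul_sub, smul_neg,
        neg_smul, smul_smul, smul_mul_assoc, mul_smul_comm, mul_assoc,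
        ag', aG', Ag', AG', aA', Aa', gG', h3, h5, Ag, AG, aA, Aa, h4,
        neg_neg, sub_zero, zero_sub, mul_zero, zero_mul, smul_zero, zero_smul, one_smul]
      try match_scalars
      all_goals
        simp only [sigSq, hvs, zetaC]
        try field_simp
        try ring
    · norm_num [vij, lamRP]
      simp only [z0, z1, z2, zm1, zm2, pow_two]
      simp only [mul_sub, sub_mul, mul_one, one_mul, mul_neg, neg_mul, smul_sub, smul_neg,
        neg_smul, smul_smul, smul_mul_assoc, mul_smul_comm, mul_assoc,
        ag', aG', Ag', AG', aA', Aa', gG', h3, h5, Ag, AG, aA, Aa, h4,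
        neg_neg, sub_zero, zero_sub, mul_zero, zero_mul, smul_zero, zero_smul, one_smul]
      try match_scalars
      all_goals
        simp only [sigSq, hvs, zetaC]
        try field_simp
        try ring
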